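/- Depth of quantile envelopes and of functions in the pointwise central region: Fix γ ∈ (0,1) and assume every marginal CDF F_t is continuous on ℝ. Then: (i) D_{q_{γ/2}}(t) = γ = D_{q_{1−γ/2}}(t) for every t ∈ I; hence Φ_{q_{γ/2}} = Φ_{q_{1−γ/2}} and q_{γ/2} ∼ q_{1−γ/2}. (ii) Every Borel measurable f : I → ℝ with q_{γ/2}(t) ≤ f(t) ≤ q_{1−γ/2}(t) for all t ∈ I satisfies D_f(t) ≥ γ for all t ∈ I, Φ_f(r) ≤ Φ_{q_{γ/2}}(r) for all r ∈ [0,1], and f ⪰ q_{γ/2}. -/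

import Mathlib

open MeasureTheory Set Filter
open scoped NNReal ENNReal symmDiff

noncomputable section

/-- The space `C(I, ℝ)` of continuous real-valued functions on `I = [0,1]`,
equipped with the sup metric. -/
abbrev FSp := C(unitInterval, ℝ)

/-- Borel σ-algebra on `C(I, ℝ)`. -/
instance : MeasurableSpace FSp := borel FSp
instance : BorelSpace FSp := ⟨rfl⟩

/-- Pointwise depth `D_g(t) = 1 - |P{x : x(t) > g(t)} - P{x : x(t) < g(t)}|`. -/
def pdepth (P : Measure FSp) (g : unitInterval → ℝ) (t : unitInterval) : ℝ :=
  1 - |(P {x : FSp | g t < x t}).toReal - (P {x : FSp | x t < g t}).toReal|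

/-- Depth CDF (d-CDF) `Φ_g(r) = Leb{t ∈ I : D_g(t) ≤ r}`. -/
def dcdf (P : Measure FSp) (g : unitInterval → ℝ) (r : ℝ) : ℝ :=
  (volume {t : unitInterval | pdepth P g t ≤ r}).toReal

/-- The set `R(g,h) = {r ∈ [0,1] : Φ_g(r) ≠ Φ_h(r)}`. -/
def Rset (P : Measure FSp) (g h : unitInterval → ℝ) : Set ℝ :=
  {r ∈ Icc (0:ℝ) 1 | dcdf P g r ≠ dcdf P h r}

/-- `g ≺ h`: `g` is more extreme than `h`, i.e. `R(g,h)` is nonempty and, with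
`r* = inf R(g,h)`, there is `δ > 0` with `Φ_g(r) > Φ_h(r)` for all
`r ∈ (r*, r*+δ) ∩ [0,1]`.  `g ⪰ h` is `¬ prec P g h`. -/
def prec (P : Measure FSp) (g h : unitInterval → ℝ) : Prop :=
  (Rset P g h).Nonempty ∧
  ∃ δ > 0, ∀ r ∈ Ioo (sInf (Rset P g h)) (sInf (Rset P g h) + δ) ∩ Icc (0:ℝ) 1,
    dcdf P h r < dcdf P g r

/-- Extremal depth `ED(g,P) = P*{x ∈ C(I,ℝ) : g ⪰ x}` (a measure applied to an
arbitrary set is the induced outer measure). -/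
def ed (P : Measure FSp) (g : unitInterval → ℝ) : ℝ :=
  (P {x : FSp | ¬ prec P g ⇑x}).toReal

/-- Minimal depth level `d_f = inf{r ∈ [0,1] : Φ_f(r) > 0}`. -/
def dmin (P : Measure FSp) (f : unitInterval → ℝ) : ℝ :=
  sInf {r ∈ Icc (0:ℝ) 1 | 0 < dcdf P f r}

/-- Marginal CDF `F_t(y) = P{x : x(t) ≤ y}`. -/
def margF (P : Measure FSp) (t : unitInterval) (y : ℝ) : ℝ :=
  (P {x : FSp | x t ≤ y}).toReal

/-- Pointwise quantile function `q_a(t) = inf{y : F_t(y) ≥ a}`. -/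
def quant (P : Measure FSp) (a : ℝ) (t : unitInterval) : ℝ :=
  sInf {y : ℝ | a ≤ margF P t y}

/-- Lower envelope `f_L(t) = inf{f(t) : f ∈ C(I,ℝ), ED(f,P) > α}`. -/
def envL (P : Measure FSp) (α : ℝ) (t : unitInterval) : ℝ :=
  sInf ((fun f : FSp => f t) '' {f : FSp | α < ed P ⇑f})

/-- Upper envelope `f_U(t) = sup{f(t) : f ∈ C(I,ℝ), ED(f,P) > α}`. -/
def envU (P : Measure FSp) (α : ℝ) (t : unitInterval) : ℝ :=
  sSup ((fun f : FSp => f t) '' {f : FSp | α < ed P ⇑f})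

/-- The `(1-α)` extremal-depth central region `C_{1-α}`. -/
def centralRegion (P : Measure FSp) (α : ℝ) : Set FSp :=
  {x : FSp | ∀ t, envL P α t ≤ x t ∧ x t ≤ envU P α t}

/-- Boundary `∂C_{1-α}` of the central region. -/
def centralBoundary (P : Measure FSp) (α : ℝ) : Set FSp :=
  {x ∈ centralRegion P α | ∃ t, x t = envL P α t ∨ x t = envU P α t}



section AuxLemmas
variable (P : Measure FSp) [IsProbabilityMeasure P] (t : unitInterval)

lemma meas_eval : Measurable fun x : FSp => x t :=
  (continuous_eval_const t).measurable

lemma msLe (y : ℝ) : MeasurableSet {x : FSp | x t ≤ y} :=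
  measurableSet_le (meas_eval t) measurable_const

lemma margF_mono : Monotone (margF P t) := fun y z h =>
  ENNReal.toReal_mono (measure_ne_top P _) (measure_mono fun x hx => le_trans hx h)

lemma toReal_lt_eq (hc : Continuous (margF P t)) (y : ℝ) :
    (P {x : FSp | x t < y}).toReal = margF P t y := by
  have hset : {x : FSp | x t < y} = ⋃ n : ℕ, {x : FSp | x t ≤ y - 1/(n+1)} := by
    ext x
    simp only [mem_setOf_eq, mem_iUnion]
    constructor
    · intro h
      obtain ⟨n, hn⟩ := exists_nat_one_div_lt (sub_pos.2 h)
      exact ⟨n, by push_cast at hn ⊢; linarith⟩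
    · rintro ⟨n, hn⟩
      have : (0:ℝ) < 1/(n+1) := by positivity
      linarith
  have hmono : Monotone fun n : ℕ => {x : FSp | x t ≤ y - 1/(n+1)} := by
    intro m n hmn x hx
    simp only [mem_setOf_eq] at *
    have h1 : (1:ℝ)/(n+1) ≤ 1/(m+1) := by
      apply one_div_le_one_div_of_le (by positivity)
      have : (m:ℝ) ≤ n := Nat.cast_le.2 hmn
      linarith
    linarith
  have h1 := tendsto_measure_iUnion_atTop (μ := P) hmono
  rw [← hset] at h1
  have h2 : Tendsto (fun n : ℕ => margF P t (y - 1/(n+1))) atTop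
      (nhds ((P {x : FSp | x t < y}).toReal)) :=
    (ENNReal.tendsto_toReal (measure_ne_top P _)).comp h1
  have h3 : Tendsto (fun n : ℕ => margF P t (y - 1/(n+1))) atTop (nhds (margF P t y)) := by
    apply (hc.tendsto y).comp
    have h4 : Tendsto (fun n : ℕ => (1:ℝ)/(n+1)) atTop (nhds 0) :=
      tendsto_one_div_add_atTop_nhds_zero_nat
    simpa using tendsto_const_nhds.sub h4
  exact tendsto_nhds_unique h2 h3

lemma toReal_gt_eq (y : ℝ) : (P {x : FSp | y < x t}).toReal = 1 - margF P t y := by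
  have h : {x : FSp | y < x t} = {x : FSp | x t ≤ y}ᶜ := by ext x; simp [not_le]
  rw [h, prob_compl_eq_one_sub (msLe t y),
    ENNReal.toReal_sub_of_le prob_le_one ENNReal.one_ne_top, ENNReal.toReal_one, margF]

lemma margF_quant (hc : Continuous (margF P t)) {a : ℝ} (ha : a ∈ Ioo (0:ℝ) 1) :
    margF P t (quant P a t) = a := by
  set S := {y : ℝ | a ≤ margF P t y} with hS
  have hSclosed : IsClosed S := isClosed_le continuous_const hc
  have hne : S.Nonempty := by
    have hu : (⋃ n : ℕ, {x : FSp | x t ≤ (n:ℝ)}) = univ := by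
      ext x
      simp only [mem_iUnion, mem_setOf_eq, mem_univ, iff_true]
      exact exists_nat_ge (x t)
    have hmono : Monotone fun n : ℕ => {x : FSp | x t ≤ (n:ℝ)} := by
      intro m n h x hx
      simp only [mem_setOf_eq] at *
      exact le_trans hx (Nat.cast_le.2 h)
    have h1 := tendsto_measure_iUnion_atTop (μ := P) hmono
    rw [hu, measure_univ] at h1
    have h2 : Tendsto (fun n : ℕ => margF P t n) atTop (nhds 1) := by
      have := (ENNReal.tendsto_toReal ENNReal.one_ne_top).comp h1
      simpa [margF, Function.comp_def] using this
    obtain ⟨n, hn⟩ := (h2.eventually (eventually_gt_nhds ha.2)).exists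
    exact ⟨n, hn.le⟩
  have hbdd : BddBelow S := by
    have hu : (⋂ n : ℕ, {x : FSp | x t ≤ -(n:ℝ)}) = ∅ := by
      ext x
      simp only [mem_iInter, mem_setOf_eq, mem_empty_iff_false, iff_false, not_forall, not_le]
      obtain ⟨n, hn⟩ := exists_nat_gt (-(x t))
      exact ⟨n, by linarith⟩
    have hanti : Antitone fun n : ℕ => {x : FSp | x t ≤ -(n:ℝ)} := by
      intro m n h x hx
      simp only [mem_setOf_eq] at *
      have : (m:ℝ) ≤ n := Nat.cast_le.2 h
      linarith
    have h1 := tendsto_measure_iInter_atTop (μ := P)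
      (fun n => (msLe t _).nullMeasurableSet) hanti ⟨0, measure_ne_top P _⟩
    rw [hu, measure_empty] at h1
    have h2 : Tendsto (fun n : ℕ => margF P t (-(n:ℝ))) atTop (nhds 0) := by
      have := (ENNReal.tendsto_toReal ENNReal.zero_ne_top).comp h1
      simpa [margF, Function.comp_def] using this
    obtain ⟨n, hn⟩ := (h2.eventually (eventually_lt_nhds ha.1)).exists
    refine ⟨-(n:ℝ), fun y hy => ?_⟩
    by_contra h
    push_neg at h
    exact absurd (hy.trans (margF_mono P t h.le)) (not_le.2 hn)
  have hmem : quant P a t ∈ S := hSclosed.csInf_mem hne hbdd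
  refine le_antisymm ?_ hmem
  by_contra h
  push_neg at h
  have hev : ∀ᶠ y in nhds (quant P a t), a < margF P t y :=
    (hc.tendsto _).eventually (eventually_gt_nhds h)
  obtain ⟨ε, hε, hball⟩ := Metric.eventually_nhds_iff.1 hev
  have hy : quant P a t - ε/2 ∈ S := by
    have : dist (quant P a t - ε/2) (quant P a t) < ε := by
      rw [Real.dist_eq]; rw [abs_of_nonpos (by linarith)]; linarith
    exact (hball this).le
  have := csInf_le hbdd hy
  rw [quant] at this
  linarith [this]

end AuxLemmas

/-- **Depth of quantile envelopes and of functions in the pointwise central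
region.** -/
theorem quantile_envelope_depth (P : Measure FSp) [IsProbabilityMeasure P]
    (γ : ℝ) (hγ : γ ∈ Ioo (0:ℝ) 1)
    (hFcont : ∀ t : unitInterval, Continuous (margF P t)) :
    ((∀ t : unitInterval,
        pdepth P (quant P (γ/2)) t = γ ∧ pdepth P (quant P (1 - γ/2)) t = γ) ∧
      (∀ r : ℝ, dcdf P (quant P (γ/2)) r = dcdf P (quant P (1 - γ/2)) r) ∧
      (¬ prec P (quant P (γ/2)) (quant P (1 - γ/2)) ∧
       ¬ prec P (quant P (1 - γ/2)) (quant P (γ/2)))) ∧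
    (∀ f : unitInterval → ℝ, Measurable f →
      (∀ t, quant P (γ/2) t ≤ f t ∧ f t ≤ quant P (1 - γ/2) t) →
      (∀ t, γ ≤ pdepth P f t) ∧
      (∀ r ∈ Icc (0:ℝ) 1, dcdf P f r ≤ dcdf P (quant P (γ/2)) r) ∧
      ¬ prec P f (quant P (γ/2))) := by
  obtain ⟨hγ0, hγ1⟩ := hγ
  have ha1 : γ/2 ∈ Ioo (0:ℝ) 1 := ⟨by linarith, by linarith⟩
  have ha2 : 1 - γ/2 ∈ Ioo (0:ℝ) 1 := ⟨by linarith, by linarith⟩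
  have pdepth_eq : ∀ (g : unitInterval → ℝ) (t : unitInterval),
      pdepth P g t = 1 - |1 - 2 * margF P t (g t)| := by
    intro g t
    rw [pdepth, toReal_gt_eq P t, toReal_lt_eq P t (hFcont t)]
    have h : 1 - margF P t (g t) - margF P t (g t) = 1 - 2 * margF P t (g t) := by ring
    rw [h]
  have hq1 : ∀ t, pdepth P (quant P (γ/2)) t = γ := by
    intro t
    rw [pdepth_eq, margF_quant P t (hFcont t) ha1, abs_of_nonneg (by linarith)]
    ring
  have hq2 : ∀ t, pdepth P (quant P (1 - γ/2)) t = γ := by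
    intro t
    rw [pdepth_eq, margF_quant P t (hFcont t) ha2, abs_of_nonpos (by linarith)]
    ring
  have hdcdf : ∀ r : ℝ, dcdf P (quant P (γ/2)) r = dcdf P (quant P (1 - γ/2)) r := by
    intro r
    unfold dcdf
    congr 2
    ext t
    simp [hq1 t, hq2 t]
  have hnoprec : ∀ g h : unitInterval → ℝ,
      (∀ r, dcdf P g r = dcdf P h r) → ¬ prec P g h := by
    rintro g h hgh ⟨⟨r, hr⟩, -⟩
    exact hr.2 (hgh r)
  refine ⟨⟨fun t => ⟨hq1 t, hq2 t⟩, hdcdf, hnoprec _ _ hdcdf,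
    hnoprec _ _ fun r => (hdcdf r).symm⟩, ?_⟩
  intro f _hf hbet
  have hdf : ∀ t, γ ≤ pdepth P f t := by
    intro t
    have h1 : γ/2 ≤ margF P t (f t) := by
      rw [← margF_quant P t (hFcont t) ha1]
      exact margF_mono P t (hbet t).1
    have h2 : margF P t (f t) ≤ 1 - γ/2 := by
      rw [← margF_quant P t (hFcont t) ha2]
      exact margF_mono P t (hbet t).2
    rw [pdepth_eq]
    have h3 : |1 - 2 * margF P t (f t)| ≤ 1 - γ := abs_le.2 ⟨by linarith, by linarith⟩
    linarith
  have hsub : ∀ r : ℝ, dcdf P f r ≤ dcdf P (quant P (γ/2)) r := by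
    intro r
    apply ENNReal.toReal_mono (measure_ne_top _ _)
    apply measure_mono
    intro t ht
    simp only [mem_setOf_eq] at *
    rw [hq1 t]
    exact le_trans (hdf t) ht
  refine ⟨hdf, fun r _ => hsub r, ?_⟩
  rintro ⟨hne, δ, hδ, hlt⟩
  set q := quant P (γ/2) with hqdef
  have h1notin : (1:ℝ) ∉ Rset P f q := by
    intro h
    apply h.2
    unfold dcdf
    congr 2
    ext t
    have hle : ∀ g : unitInterval → ℝ, pdepth P g t ≤ 1 := by
      intro g
      rw [pdepth_eq]
      have := abs_nonneg (1 - 2 * margF P t (g t))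
      linarith
    simp [hle f, hle q]
  have hRsub : Rset P f q ⊆ Icc (0:ℝ) 1 := fun r hr => hr.1
  set r0 := sInf (Rset P f q) with hr0
  have hbdd : BddBelow (Rset P f q) := ⟨0, fun r hr => (hRsub hr).1⟩
  have hr00 : 0 ≤ r0 := le_csInf hne fun r hr => (hRsub hr).1
  have hr01 : r0 < 1 := by
    rcases lt_or_ge r0 1 with h | h
    · exact h
    · exfalso
      obtain ⟨r, hr⟩ := hne
      have hle := csInf_le hbdd hr
      have h1 : r = 1 := le_antisymm (hRsub hr).2 (le_trans h hle)
      exact h1notin (h1 ▸ hr)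
  set r := (r0 + min (r0 + δ) 1) / 2 with hrdef
  have hmin : r0 < min (r0 + δ) 1 := lt_min (by linarith) hr01
  have h1 : r0 < r := by rw [hrdef]; linarith
  have h2 : r < r0 + δ := by
    have := min_le_left (r0 + δ) 1
    rw [hrdef]; linarith
  have h3 : r ≤ 1 := by
    have := min_le_right (r0 + δ) 1
    rw [hrdef]; linarith
  have hcon := hlt r ⟨⟨h1, h2⟩, by linarith, h3⟩
  exact absurd (hsub r) (not_le.2 hcon)
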